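/- In the auxiliary hypergraph H1 built from K_{n,n} (with t ≥ 2), there is a constant c depending only on t such that every pair of distinct vertices of H1 is contained in at most c·n^{2t} tiles of H1; in particular, Δ₂(H1) ≤ d^{1−ε} for d = n^{2t+1}/t!, any ε ∈ (0, 1/(2t+2)), and sufficiently large n. -/

import Mathlib

open Finset

/-- The vertex set of `K_{n,n}`: the disjoint union of the parts `X` and `Y`,
each a copy of `Fin n`. -/
abbrev Vtx (n : ℕ) := Fin n ⊕ Fin n

/-- The color set `N₁`, of size `⌈n/t⌉`. -/
abbrev Col1 (n t : ℕ) := Fin ((n + t - 1) / t)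

/-- The vertex set of the auxiliary hypergraph `H₁`: the set `U` of (2-element) subsets of
`X ∪ Y` (encoded as unordered pairs, i.e. `Sym2`), together with `V = ⋃_{i ∈ N₁} V_i`,
where each `V_i` is a copy of `X ∪ Y` (encoded as a pair of a color and a vertex). -/
abbrev VH1 (n t : ℕ) := Sym2 (Vtx n) ⊕ (Col1 n t × Vtx n)

/-- The vertex set (as a subset of `V(H₁)`) of the tile `e_{S,i}`, where the copy `S` of
`K_{t+1,t+1} − (t+1)K₂` is described by injections `a b : Fin (t+1) → Fin n` listing its
vertices in `X` and in `Y` respectively, the removed perfect matching consisting of the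
pairs `(a j, b j)`: it consists of the copies `v^i` of the vertices `v` of `S`, the edges
of `S` (the cross pairs `{a j, b j'}` with `j ≠ j'`), and all 2-element subsets of
`V(S) ∩ X` and of `V(S) ∩ Y`. -/
def tileVerts (n t : ℕ) (i : Col1 n t) (a b : Fin (t + 1) → Fin n) : Set (VH1 n t) :=
  {v | (∃ j, v = Sum.inr (i, Sum.inl (a j))) ∨
       (∃ j, v = Sum.inr (i, Sum.inr (b j))) ∨
       (∃ j j', j ≠ j' ∧ v = Sum.inl s(Sum.inl (a j), Sum.inr (b j'))) ∨
       (∃ j j', j ≠ j' ∧ v = Sum.inl s(Sum.inl (a j), Sum.inl (a j'))) ∨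
       (∃ j j', j ≠ j' ∧ v = Sum.inl s(Sum.inr (b j), Sum.inr (b j')))}

/-- `T` is a tile of `H₁`, i.e. an edge `e_{S,i}` for some color `i ∈ N₁` and some copy
`S = S' − M` of `K_{t+1,t+1}` minus a perfect matching. -/
def IsTile1 (n t : ℕ) (T : Finset (VH1 n t)) : Prop :=
  ∃ (i : Col1 n t) (a b : Fin (t + 1) → Fin n),
    Function.Injective a ∧ Function.Injective b ∧
      (T : Set (VH1 n t)) = tileVerts n t i a b

/-- The colored edges of `K_{n,n}` corresponding to a tile `T`: pairs `((x,y), i)` such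
that the edge `xy` (with `x ∈ X`, `y ∈ Y`) lies in `T` and `i` is the color of `T`. -/
def coloredEdges (n t : ℕ) (T : Finset (VH1 n t)) : Set ((Fin n × Fin n) × Col1 n t) :=
  {ec | Sum.inl s(Sum.inl ec.1.1, Sum.inr ec.1.2) ∈ T ∧ ∃ v : Vtx n, Sum.inr (ec.2, v) ∈ T}

/-- `E_C`: the set of colored edges of `K_{n,n}` corresponding to a set `C` of tiles. -/
def matchColoredEdges (n t : ℕ) (C : Finset (Finset (VH1 n t))) :
    Set ((Fin n × Fin n) × Col1 n t) :=
  ⋃ T ∈ C, coloredEdges n t T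

/-- The edge set of the complete bipartite graph between `P` and `S`, where if
`side = true` then `P ⊆ X` and `S ⊆ Y`, and if `side = false` then `S ⊆ X` and `P ⊆ Y`. -/
def copyEdges (n : ℕ) (side : Bool) (P S : Finset (Fin n)) : Finset (Fin n × Fin n) :=
  if side then P ×ˢ S else S ×ˢ P

/-- The copy of `K_{2,r}` with 2-side `P` (on the side indicated by `side`) and `r`-side
`S` (so `r = S.card`) is a *bad* copy with respect to the set `F` of colored edges: all of
its edges are colored by `F`, and no color appears on an odd number of its edges. -/
def IsBadCopy (n t : ℕ) (F : Set ((Fin n × Fin n) × Col1 n t)) (side : Bool)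
    (P S : Finset (Fin n)) : Prop :=
  P.card = 2 ∧ S.Nonempty ∧
    (∀ e ∈ copyEdges n side P S, ∃ i : Col1 n t, (e, i) ∈ F) ∧
    ∀ i : Col1 n t, Even {e : Fin n × Fin n | e ∈ copyEdges n side P S ∧ (e, i) ∈ F}.ncard

/-- A matching of tiles: a collection of pairwise disjoint tiles. -/
def IsMatching (n t : ℕ) (tile : Finset (VH1 n t) → Prop)
    (M : Finset (Finset (VH1 n t))) : Prop :=
  (∀ T ∈ M, tile T) ∧ ∀ T ∈ M, ∀ T' ∈ M, T ≠ T' → Disjoint T T'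

/-- A conflict with respect to the tile system `tile`: a matching `C` of at least two
tiles such that `E_C` contains a bad copy `K` of `K_{2,r}` for some `r ≥ 1` using at least
one edge from each tile of `C`. -/
def IsConflictWrt (n t : ℕ) (tile : Finset (VH1 n t) → Prop)
    (C : Finset (Finset (VH1 n t))) : Prop :=
  2 ≤ C.card ∧ IsMatching n t tile C ∧
    ∃ (side : Bool) (P S : Finset (Fin n)),
      IsBadCopy n t (matchColoredEdges n t C) side P S ∧
      ∀ T ∈ C, ∃ e ∈ copyEdges n side P S, ∃ i : Col1 n t, (e, i) ∈ coloredEdges n t T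

/-- `u` is a genuine vertex of `H₁`: either a 2-element subset of `X ∪ Y` (a non-diagonal
unordered pair), or a copy `v^i` of a vertex of `K_{n,n}` in some `V_i`. -/
def IsVertexH1 (n t : ℕ) : VH1 n t → Prop
  | Sum.inl s => ¬ s.IsDiag
  | Sum.inr _ => True

/-- The codegree of a pair of vertices `u, v` of `H₁`: the number of tiles of `H₁`
containing both `u` and `v`. -/
noncomputable def codegH1 (n t : ℕ) (u v : VH1 n t) : ℕ :=
  {T : Finset (VH1 n t) | IsTile1 n t T ∧ u ∈ T ∧ v ∈ T}.ncard

-- ### auxiliary definitions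

/-- parameter space -/
abbrev Prm (n t : ℕ) := Col1 n t × (Fin (t + 1) → Fin n) × (Fin (t + 1) → Fin n)

open Classical in
noncomputable def pinset (n t : ℕ) : VH1 n t → Finset (Vtx n)
  | Sum.inl s => Finset.univ.filter (· ∈ s)
  | Sum.inr (_, w) => {w}

def colC (n t : ℕ) : VH1 n t → Finset (Col1 n t)
  | Sum.inl _ => Finset.univ
  | Sum.inr (i, _) => {i}

lemma mem_colC {n t : ℕ} {i : Col1 n t} {a b : Fin (t+1) → Fin n} {u : VH1 n t}
    (hu : u ∈ tileVerts n t i a b) : i ∈ colC n t u := by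
  rcases hu with ⟨j, rfl⟩ | ⟨j, rfl⟩ | ⟨j, j', hj, rfl⟩ | ⟨j, j', hj, rfl⟩ | ⟨j, j', hj, rfl⟩ <;>
    simp [colC]

lemma pinset_inl_mk {n t : ℕ} (x y : Vtx n) :
    pinset n t (Sum.inl s(x, y)) = {x, y} := by
  ext w
  simp [pinset, Sym2.mem_iff]

lemma mem_pins {n t : ℕ} {i : Col1 n t} {a b : Fin (t+1) → Fin n} {u : VH1 n t}
    (hu : u ∈ tileVerts n t i a b) :
    ∀ w ∈ pinset n t u, w ∈ Set.range (Sum.map a b) := by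
  rcases hu with ⟨j, rfl⟩ | ⟨j, rfl⟩ | ⟨j, j', hj, rfl⟩ | ⟨j, j', hj, rfl⟩ | ⟨j, j', hj, rfl⟩ <;>
    intro w hw
  · simp only [pinset, Finset.mem_singleton] at hw
    exact ⟨Sum.inl j, by simp [hw]⟩
  · simp only [pinset, Finset.mem_singleton] at hw
    exact ⟨Sum.inr j, by simp [hw]⟩
  · rw [pinset_inl_mk, Finset.mem_insert, Finset.mem_singleton] at hw
    rcases hw with rfl | rfl
    exacts [⟨Sum.inl j, rfl⟩, ⟨Sum.inr j', rfl⟩]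
  · rw [pinset_inl_mk, Finset.mem_insert, Finset.mem_singleton] at hw
    rcases hw with rfl | rfl
    exacts [⟨Sum.inl j, rfl⟩, ⟨Sum.inl j', rfl⟩]
  · rw [pinset_inl_mk, Finset.mem_insert, Finset.mem_singleton] at hw
    rcases hw with rfl | rfl
    exacts [⟨Sum.inr j, rfl⟩, ⟨Sum.inr j', rfl⟩]

open Classical in
lemma key_count (n t : ℕ) (I : Finset (Col1 n t)) (S : Finset (Vtx n)) :
    {p : Prm n t | p.1 ∈ I ∧ ∀ w ∈ S, w ∈ Set.range (Sum.map p.2.1 p.2.2)}.ncard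
      ≤ I.card * (2*t+2)^S.card * n^(2*t+2 - S.card) := by
  classical
  set A := (Fin (t+1)) ⊕ (Fin (t+1)) with hA
  have hcardA : Fintype.card A = 2*t+2 := by
    simp [hA, Fintype.card_sum]; omega
  set s := {p : Prm n t | p.1 ∈ I ∧ ∀ w ∈ S, w ∈ Set.range (Sum.map p.2.1 p.2.2)} with hs
  have hfin : s.Finite := Set.toFinite _
  rw [Set.ncard_eq_toFinset_card s hfin]
  set fib : (↥S ↪ A) → Finset (Prm n t) := fun φ =>
    (Set.toFinite {p : Prm n t | p.1 ∈ I ∧ ∀ w : ↥S,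
      Sum.map p.2.1 p.2.2 (φ w) = ↑w}).toFinset with hfib
  have hcov : hfin.toFinset ⊆ (Finset.univ : Finset (↥S ↪ A)).biUnion fib := by
    intro p hp
    rw [Set.Finite.mem_toFinset] at hp
    obtain ⟨hI, hS⟩ := hp
    have hch : ∀ w : ↥S, ∃ j : A, Sum.map p.2.1 p.2.2 j = ↑w := fun w => hS w w.2
    choose φ hφ using hch
    have hinj : Function.Injective φ := by
      intro w w' h
      have h1 := hφ w
      rw [h, hφ w'] at h1
      exact Subtype.ext (by exact_mod_cast h1.symm)
    rw [Finset.mem_biUnion]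
    exact ⟨⟨φ, hinj⟩, Finset.mem_univ _, by
      rw [hfib, Set.Finite.mem_toFinset]; exact ⟨hI, hφ⟩⟩
  refine le_trans (Finset.card_le_card hcov) (le_trans Finset.card_biUnion_le ?_)
  have hfibcard : ∀ φ : ↥S ↪ A, (fib φ).card ≤ I.card * n^(2*t+2 - S.card) := by
    intro φ
    have hcompl : Fintype.card {j : A // j ∉ Set.range ⇑φ} = 2*t+2 - S.card := by
      have h1 : Fintype.card {j : A // j ∈ Set.range ⇑φ} = S.card := by
        have h2 := Set.card_range_of_injective φ.injective
        rw [show Fintype.card {j : A // j ∈ Set.range ⇑φ} = Fintype.card ↥(Set.range ⇑φ) from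
          Fintype.card_congr (Equiv.refl _), h2, Fintype.card_coe]
      rw [Fintype.card_subtype_compl, hcardA, h1]
    -- injection into Col1 × functions
    have := Finset.card_le_card_of_injOn
      (f := fun p : Prm n t => (p.1, fun j : {j : A // j ∉ Set.range ⇑φ} => Sum.elim p.2.1 p.2.2 j.1))
      (s := fib φ)
      (t := I ×ˢ (Finset.univ : Finset ({j : A // j ∉ Set.range ⇑φ} → Fin n)))
      ?_ ?_
    · refine le_trans this ?_
      rw [Finset.card_product, Finset.card_univ, Fintype.card_fun, Fintype.card_fin, hcompl]
    · intro p hp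
      simp only [Finset.mem_coe, hfib, Set.Finite.mem_toFinset] at hp
      exact Finset.mem_product.2 ⟨hp.1, Finset.mem_univ _⟩
    · intro p hp p' hp' heq
      rw [Finset.mem_coe, hfib, Set.Finite.mem_toFinset] at hp hp'
      have h1 : p.1 = p'.1 := (Prod.ext_iff.1 heq).1
      have h2 := (Prod.ext_iff.1 heq).2
      have helim : ∀ j : A, Sum.elim p.2.1 p.2.2 j = Sum.elim p'.2.1 p'.2.2 j := by
        intro j
        by_cases hj : j ∈ Set.range ⇑φ
        · obtain ⟨w, rfl⟩ := hj
          have e1 := hp.2 w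
          have e2 := hp'.2 w
          have e3 : Sum.map p.2.1 p.2.2 (φ w) = Sum.map p'.2.1 p'.2.2 (φ w) := by
            rw [e1, e2]
          cases hc : φ w with
          | inl j0 => rw [hc] at e3; simpa using e3
          | inr j0 => rw [hc] at e3; simpa using e3
        · exact congrFun h2 ⟨j, hj⟩
      have ha : p.2.1 = p'.2.1 := funext fun j0 => helim (Sum.inl j0)
      have hb : p.2.2 = p'.2.2 := funext fun j0 => helim (Sum.inr j0)
      exact Prod.ext h1 (Prod.ext ha hb)
  calc ∑ φ : ↥S ↪ A, (fib φ).card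
      ≤ ∑ _φ : ↥S ↪ A, I.card * n^(2*t+2 - S.card) :=
        Finset.sum_le_sum fun φ _ => hfibcard φ
    _ = Fintype.card (↥S ↪ A) * (I.card * n^(2*t+2 - S.card)) := by
        rw [Finset.sum_const, Finset.card_univ, smul_eq_mul]
    _ ≤ (2*t+2)^S.card * (I.card * n^(2*t+2 - S.card)) := by
        apply Nat.mul_le_mul_right
        rw [Fintype.card_embedding_eq, hcardA, Fintype.card_coe]
        exact Nat.descFactorial_le_pow _ _
    _ = I.card * (2*t+2)^S.card * n^(2*t+2 - S.card) := by ring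

lemma codeg_le (n t : ℕ) (u v : VH1 n t) :
    codegH1 n t u v ≤ (colC n t u ∩ colC n t v).card *
      (2*t+2)^((pinset n t u ∪ pinset n t v).card) *
      n^(2*t+2 - (pinset n t u ∪ pinset n t v).card) := by
  classical
  refine le_trans ?_ (key_count n t (colC n t u ∩ colC n t v) (pinset n t u ∪ pinset n t v))
  rw [codegH1]
  rcases Set.eq_empty_or_nonempty {T : Finset (VH1 n t) | IsTile1 n t T ∧ u ∈ T ∧ v ∈ T}
    with he | ⟨T₀, hT₀⟩
  · rw [he]; simp
  · obtain ⟨i₀, a₀, b₀, -⟩ := hT₀.1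
    have hne : Nonempty (Prm n t) := ⟨(i₀, a₀, b₀)⟩
    set f : Finset (VH1 n t) → Prm n t := fun T =>
      if h : IsTile1 n t T then
        (h.choose, h.choose_spec.choose, h.choose_spec.choose_spec.choose)
      else Classical.arbitrary _ with hf
    have hspec : ∀ T : Finset (VH1 n t), (h : IsTile1 n t T) →
        (T : Set (VH1 n t)) = tileVerts n t (f T).1 (f T).2.1 (f T).2.2 := by
      intro T h
      rw [hf]
      simp only [dif_pos h]
      exact h.choose_spec.choose_spec.choose_spec.2.2
    apply Set.ncard_le_ncard_of_injOn f ?_ ?_ (Set.toFinite _)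
    · rintro T ⟨hT, hu, hv⟩
      have hsp := hspec T hT
      have hu' : u ∈ tileVerts n t (f T).1 (f T).2.1 (f T).2.2 := by
        rw [← hsp]; exact hu
      have hv' : v ∈ tileVerts n t (f T).1 (f T).2.1 (f T).2.2 := by
        rw [← hsp]; exact hv
      refine ⟨Finset.mem_inter.2 ⟨mem_colC hu', mem_colC hv'⟩, ?_⟩
      intro w hw
      rcases Finset.mem_union.1 hw with h | h
      · exact mem_pins hu' w h
      · exact mem_pins hv' w h
    · rintro T ⟨hT, -, -⟩ T' ⟨hT', -, -⟩ heq
      apply Finset.coe_injective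
      rw [hspec T hT, hspec T' hT', heq]

lemma pinset_card_inl {n t : ℕ} {s : Sym2 (Vtx n)} (hs : ¬ s.IsDiag) :
    (pinset n t (Sum.inl s)).card = 2 := by
  induction s using Sym2.ind with
  | _ x y =>
    rw [Sym2.mk_isDiag_iff] at hs
    rw [pinset_inl_mk]
    exact Finset.card_pair hs

lemma pinset_card_inr {n t : ℕ} (i : Col1 n t) (w : Vtx n) :
    (pinset n t (Sum.inr (i, w))).card = 1 := rfl

lemma three_le_union {n t : ℕ} {s s' : Sym2 (Vtx n)} (hs : ¬ s.IsDiag) (hs' : ¬ s'.IsDiag)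
    (hne : s ≠ s') :
    3 ≤ (pinset n t (Sum.inl s) ∪ pinset n t (Sum.inl s')).card := by
  classical
  induction s using Sym2.ind with
  | _ x y =>
  induction s' using Sym2.ind with
  | _ x' y' =>
  rw [Sym2.mk_isDiag_iff] at hs hs'
  rw [pinset_inl_mk, pinset_inl_mk]
  have hPne : ({x, y} : Finset (Vtx n)) ≠ {x', y'} := by
    intro h
    apply hne
    have hx' : x' ∈ ({x, y} : Finset (Vtx n)) := by rw [h]; simp
    have hy' : y' ∈ ({x, y} : Finset (Vtx n)) := by rw [h]; simp
    have hx : x ∈ ({x', y'} : Finset (Vtx n)) := by rw [← h]; simp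
    have hy : y ∈ ({x', y'} : Finset (Vtx n)) := by rw [← h]; simp
    simp only [Finset.mem_insert, Finset.mem_singleton] at hx' hy' hx hy
    rw [Sym2.eq_iff]
    tauto
  have hPc : ({x, y} : Finset (Vtx n)).card = 2 := Finset.card_pair hs
  have hQc : ({x', y'} : Finset (Vtx n)).card = 2 := Finset.card_pair hs'
  have hns : ¬ ({x', y'} : Finset (Vtx n)) ⊆ {x, y} := by
    intro h
    exact hPne (Finset.eq_of_subset_of_card_le h (by omega)).symm
  obtain ⟨w, hwQ, hwP⟩ := Finset.not_subset.1 hns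
  calc 3 = (insert w ({x, y} : Finset (Vtx n))).card := by
        rw [Finset.card_insert_of_notMem hwP, hPc]
    _ ≤ (({x, y} : Finset (Vtx n)) ∪ {x', y'}).card := by
        apply Finset.card_le_card
        intro z hz
        rcases Finset.mem_insert.1 hz with rfl | hz
        · exact Finset.mem_union_right _ hwQ
        · exact Finset.mem_union_left _ hz

lemma arith1 {n t Ic K : ℕ} (hn : 1 ≤ n) (ht : 2 ≤ t) (hK4 : K ≤ 4)
    (h : Ic = 0 ∨ (Ic ≤ 1 ∧ 2 ≤ K) ∨ (Ic ≤ n ∧ 3 ≤ K)) :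
    Ic * (2*t+2)^K * n^(2*t+2-K) ≤ (2*t+2)^4 * n^(2*t) := by
  rcases h with rfl | ⟨h1, h2⟩ | ⟨h1, h2⟩
  · simp
  · have h3 := Nat.mul_le_mul (Nat.mul_le_mul h1 (Nat.pow_le_pow_right (by omega : 1 ≤ 2*t+2) hK4))
      (Nat.pow_le_pow_right hn (by omega : 2*t+2-K ≤ 2*t))
    simpa using h3
  · have h3 : n * (2*t+2)^4 * n^(2*t-1) = (2*t+2)^4 * n^(2*t) := by
      have he : 2*t-1+1 = 2*t := by omega
      rw [mul_comm n ((2*t+2)^4), mul_assoc, ← pow_succ', he]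
    have h4 := Nat.mul_le_mul (Nat.mul_le_mul h1 (Nat.pow_le_pow_right (by omega : 1 ≤ 2*t+2) hK4))
      (Nat.pow_le_pow_right hn (by omega : 2*t+2-K ≤ 2*t-1))
    exact le_trans h4 (le_of_eq h3)

lemma codeg_nat (n t : ℕ) (ht : 2 ≤ t) (hn : 1 ≤ n) (u v : VH1 n t)
    (hu : IsVertexH1 n t u) (hv : IsVertexH1 n t v) (huv : u ≠ v) :
    codegH1 n t u v ≤ (2*t+2)^4 * n^(2*t) := by
  classical
  refine le_trans (codeg_le n t u v) ?_
  have hK4 : (pinset n t u ∪ pinset n t v).card ≤ 4 := by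
    refine le_trans (Finset.card_union_le _ _) ?_
    have h1 : (pinset n t u).card ≤ 2 := by
      rcases u with s | ⟨i, w⟩
      · rw [pinset_card_inl hu]
      · rw [pinset_card_inr]; omega
    have h2 : (pinset n t v).card ≤ 2 := by
      rcases v with s | ⟨i, w⟩
      · rw [pinset_card_inl hv]
      · rw [pinset_card_inr]; omega
    omega
  apply arith1 hn ht hK4
  rcases u with s | ⟨i, w⟩ <;> rcases v with s' | ⟨i', w'⟩
  · -- both pairs
    right; right
    constructor
    · refine le_trans (Finset.card_le_card Finset.inter_subset_left) ?_
      show (Finset.univ : Finset (Col1 n t)).card ≤ n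
      rw [Finset.card_univ, Fintype.card_fin]
      rw [Nat.div_le_iff_le_mul_add_pred (by omega)]
      have : n ≤ t * n := Nat.le_mul_of_pos_left n (by omega)
      omega
    · exact three_le_union hu hv (fun h => huv (by rw [h]))
  · -- pair, copy
    right; left
    constructor
    · refine le_trans (Finset.card_le_card Finset.inter_subset_right) ?_
      simp [colC]
    · refine le_trans ?_ (Finset.card_le_card Finset.subset_union_left)
      rw [pinset_card_inl hu]
  · -- copy, pair
    right; left
    constructor
    · refine le_trans (Finset.card_le_card Finset.inter_subset_left) ?_
      simp [colC]
    · refine le_trans ?_ (Finset.card_le_card Finset.subset_union_right)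
      rw [pinset_card_inl hv]
  · -- both copies
    by_cases hi : i = i'
    · subst hi
      right; left
      have hw : w ≠ w' := fun h => huv (by rw [h])
      constructor
      · refine le_trans (Finset.card_le_card Finset.inter_subset_left) ?_
        simp [colC]
      · have : pinset n t (Sum.inr (i, w)) ∪ pinset n t (Sum.inr (i, w')) = {w, w'} := by
          simp [pinset]
        rw [this, Finset.card_pair hw]
    · left
      have h5 : colC n t (Sum.inr (i, w)) ∩ colC n t (Sum.inr (i', w')) = ∅ := by
        simp only [colC]
        exact Finset.singleton_inter_of_notMem (by simpa using hi)
      rw [h5]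
      simp


/-- In the auxiliary hypergraph `H₁` built from `K_{n,n}` (with `t ≥ 2`), there is a
constant `c` depending only on `t` such that every pair of distinct vertices of `H₁` lies
in at most `c·n^{2t}` tiles; in particular `Δ₂(H₁) ≤ d^{1−ε}` for `d = n^{2t+1}/t!`,
any `ε ∈ (0, 1/(2t+2))` and sufficiently large `n`. -/
theorem stmt15 (t : ℕ) (ht : 2 ≤ t) :
    (∃ c : ℝ, 0 < c ∧ ∀ n : ℕ, 1 ≤ n → ∀ u v : VH1 n t,
      IsVertexH1 n t u → IsVertexH1 n t v → u ≠ v →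
        (codegH1 n t u v : ℝ) ≤ c * (n : ℝ) ^ (2 * t)) ∧
    ∀ ε : ℝ, 0 < ε → ε < 1 / (2 * t + 2) → ∃ n₀ : ℕ, ∀ n : ℕ, n₀ ≤ n →
      ∀ u v : VH1 n t, IsVertexH1 n t u → IsVertexH1 n t v → u ≠ v →
        (codegH1 n t u v : ℝ) ≤
          ((n : ℝ) ^ (2 * t + 1) / (t.factorial : ℝ)) ^ ((1 : ℝ) - ε) := by
  have hcnat : ∀ n : ℕ, 1 ≤ n → ∀ u v : VH1 n t,
      IsVertexH1 n t u → IsVertexH1 n t v → u ≠ v →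
      (codegH1 n t u v : ℝ) ≤ (((2*t+2)^4 : ℕ) : ℝ) * (n : ℝ) ^ (2 * t) := by
    intro n hn u v hu hv huv
    have := codeg_nat n t ht hn u v hu hv huv
    exact_mod_cast this
  set c : ℝ := (((2*t+2)^4 : ℕ) : ℝ) with hcdef
  have hc1 : (1:ℝ) ≤ c := by
    rw [hcdef]
    exact_mod_cast Nat.one_le_iff_ne_zero.2 (by positivity)
  have hc0 : (0:ℝ) < c := lt_of_lt_of_le one_pos hc1
  constructor
  · exact ⟨c, hc0, hcnat⟩
  intro ε hε hε'
  have ht2 : (0:ℝ) < 2 * (t:ℝ) + 2 := by positivity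
  set F : ℝ := (t.factorial : ℝ) with hFdef
  have hF1 : (1:ℝ) ≤ F := by
    rw [hFdef]
    exact_mod_cast t.factorial_pos
  have hF0 : (0:ℝ) < F := lt_of_lt_of_le one_pos hF1
  set δ : ℝ := 1 / (2 * (t:ℝ) + 2) - ε with hδdef
  have hδ : 0 < δ := by
    rw [hδdef]
    have : ε < 1 / (2 * (t:ℝ) + 2) := hε'
    linarith
  set B : ℝ := max 1 ((c * F) ^ ((1:ℝ)/δ)) with hBdef
  have hB1 : (1:ℝ) ≤ B := le_max_left _ _
  refine ⟨⌈F * B⌉₊ + 1, fun n hn => ?_⟩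
  intro u v hu hv huv
  have hn1 : 1 ≤ n := by omega
  have hnR1 : (1:ℝ) ≤ (n:ℝ) := by exact_mod_cast hn1
  have hnR : F * B ≤ (n:ℝ) := by
    calc F * B ≤ (⌈F * B⌉₊ : ℝ) := Nat.le_ceil _
      _ ≤ (n : ℝ) := by exact_mod_cast Nat.le_of_succ_le hn
  set d : ℝ := (n:ℝ) ^ (2*t+1) / F with hddef
  have hd_ge : B ≤ d := by
    rw [hddef, le_div_iff₀ hF0]
    calc B * F = F * B := mul_comm _ _
      _ ≤ (n:ℝ) := hnR
      _ ≤ (n:ℝ) ^ (2*t+1) := le_self_pow₀ hnR1 (by omega)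
  have hd1 : (1:ℝ) ≤ d := le_trans hB1 hd_ge
  have hd0 : (0:ℝ) < d := lt_of_lt_of_le one_pos hd1
  refine le_trans (hcnat n hn1 u v hu hv huv) ?_
  -- main inequality : c * n^(2t) ≤ d^(1-ε)
  set q : ℝ := (2 * (t:ℝ) + 1) / (2 * (t:ℝ) + 2) with hqdef
  have hq0 : 0 ≤ q := by positivity
  have hq1 : q ≤ 1 := by
    rw [hqdef, div_le_one ht2]
    linarith
  have hsplit : (1:ℝ) - ε = q + δ := by
    rw [hqdef, hδdef]
    field_simp
    ring
  rw [hsplit, Real.rpow_add hd0]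
  have hA : (n:ℝ)^(2*t) / F ≤ d ^ q := by
    rw [hddef, Real.div_rpow (by positivity) (le_of_lt hF0)]
    have h1 : ((n:ℝ) ^ (2*t+1)) ^ q = (n:ℝ) ^ (((2*t+1 : ℕ):ℝ) * q) := by
      rw [Real.rpow_mul (by positivity), Real.rpow_natCast]
    have h2 : (n:ℝ) ^ ((2*t : ℕ):ℝ) ≤ (n:ℝ) ^ (((2*t+1 : ℕ):ℝ) * q) := by
      apply Real.rpow_le_rpow_of_exponent_le hnR1
      rw [hqdef, ← mul_div_assoc, le_div_iff₀ ht2]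
      push_cast
      nlinarith [sq_nonneg ((t:ℝ))]
    have h3 : (n:ℝ)^(2*t) ≤ ((n:ℝ) ^ (2*t+1)) ^ q := by
      rw [h1, ← Real.rpow_natCast (n:ℝ) (2*t)]
      exact h2
    have h4 : F ^ q ≤ F := by
      calc F ^ q ≤ F ^ (1:ℝ) := Real.rpow_le_rpow_of_exponent_le hF1 hq1
        _ = F := Real.rpow_one F
    exact div_le_div₀ (by positivity) h3 (Real.rpow_pos_of_pos hF0 q) h4
  have hB2 : c * F ≤ d ^ δ := by
    have hcF0 : (0:ℝ) ≤ c * F := by positivity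
    have h5 : (c*F) ^ ((1:ℝ)/δ) ≤ d := le_trans (le_max_right _ _) hd_ge
    calc c * F = ((c*F) ^ ((1:ℝ)/δ)) ^ δ := by
          rw [← Real.rpow_mul hcF0, one_div_mul_cancel (ne_of_gt hδ), Real.rpow_one]
      _ ≤ d ^ δ := Real.rpow_le_rpow (Real.rpow_nonneg hcF0 _) h5 (le_of_lt hδ)
  calc c * (n:ℝ)^(2*t) = ((n:ℝ)^(2*t) / F) * (c * F) := by
        field_simp
    _ ≤ d ^ q * d ^ δ := mul_le_mul hA hB2 (by positivity) (Real.rpow_nonneg (le_of_lt hd0) _)
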